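/- Let v₁=(1,3,2), v₂=(1,3,0), v₃=(1,0,2), v₄=(1,0,0), v₅=(-1,-1,2), v₆=(-1,-1,-4), v₇=(-1,-2,2), v₈=(-1,-2,-4) in ℤ³, and let φ : ℤ³ → ℤ⁸ be the homomorphism u ↦ (⟨u,v₁⟩, …, ⟨u,v₈⟩). Then φ is injective and its cokernel ℤ⁸/φ(ℤ³) is isomorphic as an abelian group to ℤ⁵ × ℤ/2ℤ. (This computes Cl(X) ≅ ℤ⁵ ⊕ ℤ/2ℤ for the first toric Fano 3-fold of Remark 2.2.) -/

import Mathlib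

set_option maxHeartbeats 1600000

/-- The eight vertices of the first polytope of Remark 2.2. -/
def vertsRmk22a : Fin 8 → Fin 3 → ℤ :=
  ![![1, 3, 2], ![1, 3, 0], ![1, 0, 2], ![1, 0, 0],
    ![-1, -1, 2], ![-1, -1, -4], ![-1, -2, 2], ![-1, -2, -4]]

/-- The map `ℤ³ → ℤ⁸`, `u ↦ (⟨u,v₁⟩, …, ⟨u,v₈⟩)`. -/
def phiRmk22a : (Fin 3 → ℤ) →+ (Fin 8 → ℤ) :=
  AddMonoidHom.mk'
    (fun u i => ∑ j, u j * vertsRmk22a i j)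
    (by
      intro a b
      funext i
      simp [Pi.add_apply, add_mul, Finset.sum_add_distrib])

/-- Rows 3..7 of `U⁻¹` from the Smith normal form `M = U · diag(1,1,-2) · V`. -/
def psiA : Fin 5 → Fin 8 → ℤ :=
  ![![-3, 5, 0, 1, 0, 0, 3, 0],
    ![1, -2, 0, 0, 1, 0, -2, 0],
    ![4, -5, 0, 0, 0, 1, -2, 0],
    ![-4, 6, 1, 0, 0, 0, 3, 0],
    ![3, -3, 0, 0, 0, 0, -1, 1]]

/-- Row 2 of `U⁻¹`. -/
def psiB : Fin 8 → ℤ := ![-1, 1, 0, 0, 0, 0, 0, 0]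

/-- The projection `ℤ⁸ → ℤ⁵ × ℤ/2` whose kernel is the image of `φ`. -/
def psiRmk22a : (Fin 8 → ℤ) →+ (Fin 5 → ℤ) × ZMod 2 :=
  AddMonoidHom.mk'
    (fun x => (fun k => ∑ i, psiA k i * x i, ((∑ i, psiB i * x i : ℤ) : ZMod 2)))
    (by
      intro a b
      refine Prod.ext (funext fun k => ?_) ?_ <;>
        simp [Pi.add_apply, mul_add, Finset.sum_add_distrib])

lemma psi_snd (x : Fin 8 → ℤ) :
    (psiRmk22a x).2 = ((-x 0 + x 1 : ℤ) : ZMod 2) := by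
  show ((∑ i, psiB i * x i : ℤ) : ZMod 2) = _
  congr 1
  simp [psiB, Fin.sum_univ_succ, Matrix.cons_val_succ, Matrix.cons_val_zero,
    Matrix.vecHead, Matrix.vecTail]

lemma psi_surj : Function.Surjective psiRmk22a := by
  rintro ⟨w, c⟩
  refine ⟨![0, (c.val : ℤ), w 3 - 6 * c.val, w 0 - 5 * c.val, w 1 + 2 * c.val,
    w 2 + 5 * c.val, 0, w 4 + 3 * c.val], ?_⟩
  have hfst : ∀ k, (∑ i, psiA k i * (![0, (c.val : ℤ), w 3 - 6 * c.val, w 0 - 5 * c.val,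
      w 1 + 2 * c.val, w 2 + 5 * c.val, 0, w 4 + 3 * c.val]) i) = w k := by
    simp only [Fin.forall_fin_succ]
    simp [psiA, Fin.sum_univ_succ, Matrix.cons_val_succ, Matrix.cons_val_zero,
      Matrix.vecHead, Matrix.vecTail]
    all_goals and_intros
    all_goals first | rfl | ring | exact fun i => i.elim0
  refine Prod.ext (funext fun k => hfst k) ?_
  rw [psi_snd]
  simp [Matrix.cons_val_zero, Matrix.cons_val_one, Matrix.vecHead,
    ZMod.natCast_val, ZMod.cast_id]

lemma range_eq_ker : phiRmk22a.range = psiRmk22a.ker := by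
  ext x
  constructor
  · rintro ⟨u, rfl⟩
    have hfst : ∀ k, (∑ i, psiA k i * phiRmk22a u i) = 0 := by
      simp only [Fin.forall_fin_succ]
      simp [psiA, phiRmk22a, vertsRmk22a, Fin.sum_univ_succ, Matrix.cons_val_succ,
        Matrix.cons_val_zero, Matrix.vecHead, Matrix.vecTail]
      all_goals and_intros
      all_goals first | rfl | ring | exact fun i => i.elim0
    refine Prod.ext (funext fun k => hfst k) ?_
    rw [psi_snd]
    rw [show (-phiRmk22a u 0 + phiRmk22a u 1 : ℤ) = -2 * u 2 by
      show -(∑ j, u j * vertsRmk22a 0 j) + (∑ j, u j * vertsRmk22a 1 j) = _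
      simp [vertsRmk22a, Fin.sum_univ_succ, Matrix.cons_val_succ, Matrix.cons_val_zero,
        Matrix.vecHead, Matrix.vecTail]
      ring]
    exact (ZMod.intCast_zmod_eq_zero_iff_dvd _ 2).mpr ⟨-u 2, by ring⟩
  · intro hx
    have hx0 : psiRmk22a x = 0 := hx
    have hfst : ∀ k, (∑ i, psiA k i * x i) = 0 := fun k => congrFun (congrArg Prod.fst hx0) k
    have h0 := hfst 0; have h1 := hfst 1; have h2 := hfst 2
    have h3 := hfst 3; have h4 := hfst 4
    simp [psiA, Fin.sum_univ_succ, Matrix.cons_val_succ, Matrix.cons_val_zero,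
      Matrix.vecHead, Matrix.vecTail] at h0 h1 h2 h3 h4
    have hb : ((-x 0 + x 1 : ℤ) : ZMod 2) = 0 := by rw [← psi_snd, hx0]; rfl
    obtain ⟨t, ht⟩ := (ZMod.intCast_zmod_eq_zero_iff_dvd _ 2).mp hb
    have e3 : x (Fin.succ 2) = x 3 := rfl
    have e4 : x ((2 : Fin 6).succ).succ = x 4 := rfl
    have e5 : x (((2 : Fin 5).succ).succ).succ = x 5 := rfl
    have e6 : x ((((2 : Fin 4).succ).succ).succ).succ = x 6 := rfl
    have e7 : x (((((2 : Fin 3).succ).succ).succ).succ).succ = x 7 := rfl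
    have hall : ∀ i, phiRmk22a (![-2 * x 0 - 3 * x 6 - 10 * t, x 0 + x 6 + 4 * t, -t]) i = x i := by
      simp only [Fin.forall_fin_succ]
      simp [phiRmk22a, vertsRmk22a, Fin.sum_univ_succ, Matrix.cons_val_succ,
        Matrix.cons_val_zero, Matrix.vecHead, Matrix.vecTail]
      all_goals and_intros
      all_goals first | rfl | omega | exact fun i => i.elim0
    exact ⟨_, funext hall⟩

theorem stmt_8 :
    Function.Injective phiRmk22a ∧
      Nonempty (((Fin 8 → ℤ) ⧸ phiRmk22a.range) ≃+ (Fin 5 → ℤ) × ZMod 2) := by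
  constructor
  · intro u v h
    have h0 := congrFun h 0
    have h1 := congrFun h 1
    have h3 := congrFun h 3
    simp [phiRmk22a, vertsRmk22a, Fin.sum_univ_succ, Matrix.cons_val_succ,
      Matrix.cons_val_zero, Matrix.vecHead, Matrix.vecTail] at h0 h1 h3
    have hall : ∀ j, u j = v j := by
      simp only [Fin.forall_fin_succ, Fin.succ_zero_eq_one, Fin.succ_one_eq_two]
      refine ⟨?_, ?_, ?_, fun i => i.elim0⟩ <;> omega
    exact funext hall
  · rw [range_eq_ker]
    exact ⟨QuotientAddGroup.quotientKerEquivOfSurjective psiRmk22a psi_surj⟩
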